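/- arXiv:1904.08551 — 2 statements merged into one kernel-verified Lean document; each statement's English description precedes it below -/
import Mathlib

section
/- For every ε > 0, inf_{s∈S} μ_0({θ ∈ Θ : f(θ,s) ≤ ε}) > 0. -/
open MeasureTheory Metric

/-- If `Θ` and `S` are compact metric spaces, `f : Θ × S → ℝ` is
continuous, nonnegative, attains the value `0` in `θ` for every `s`, and `μ₀` is a
full-support Borel probability measure on `Θ`, then for every `ε > 0`,
`inf_{s∈S} μ₀({θ : f(θ,s) ≤ ε}) > 0`. -/
theorem stmt3
    {Θ : Type} [MetricSpace Θ] [CompactSpace Θ] [MeasurableSpace Θ] [BorelSpace Θ]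
    {S : Type} [MetricSpace S] [CompactSpace S]
    (f : Θ × S → ℝ) (hfcont : Continuous f) (hfnonneg : ∀ p, 0 ≤ f p)
    (hfmin : ∀ s : S, ∃ θ : Θ, f (θ, s) = 0)
    (μ₀ : Measure Θ) [IsProbabilityMeasure μ₀]
    (hfull : ∀ A : Set Θ, IsOpen A → A.Nonempty → 0 < μ₀ A) :
    ∀ ε > (0 : ℝ), 0 < ⨅ s : S, μ₀ {θ : Θ | f (θ, s) ≤ ε} := by
  intro ε hε
  rcases isEmpty_or_nonempty S with h | h
  · simp [iInf_of_empty]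
  have hfu : UniformContinuous f := CompactSpace.uniformContinuous_of_continuous hfcont
  rw [Metric.uniformContinuous_iff] at hfu
  obtain ⟨δ, hδ, hδf⟩ := hfu (ε / 2) (by linarith)
  obtain ⟨T, -, hTfin, hTcov⟩ :=
    finite_cover_balls_of_compact (isCompact_univ (X := S)) hδ
  set g : S → ENNReal := fun t => μ₀ {θ : Θ | f (θ, t) < ε / 2} with hg
  have hgpos : ∀ t, 0 < g t := by
    intro t
    apply hfull
    · exact isOpen_lt (by fun_prop) continuous_const
    · obtain ⟨θ, hθ⟩ := hfmin t
      exact ⟨θ, by simp [hθ]; linarith⟩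
  have hTne : hTfin.toFinset.Nonempty := by
    obtain ⟨s⟩ := h
    have := hTcov (Set.mem_univ s)
    simp only [Set.mem_iUnion] at this
    obtain ⟨t, ht, -⟩ := this
    exact ⟨t, hTfin.mem_toFinset.2 ht⟩
  have key : ∀ s : S, hTfin.toFinset.inf' hTne g ≤ μ₀ {θ : Θ | f (θ, s) ≤ ε} := by
    intro s
    have := hTcov (Set.mem_univ s)
    simp only [Set.mem_iUnion] at this
    obtain ⟨t, ht, hst⟩ := this
    have hsub : {θ : Θ | f (θ, t) < ε / 2} ⊆ {θ : Θ | f (θ, s) ≤ ε} := by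
      intro θ hθ
      have hd : dist ((θ, s) : Θ × S) (θ, t) < δ := by
        rw [Prod.dist_eq]
        simpa [hδ] using hst
      have := hδf hd
      rw [Real.dist_eq] at this
      have := abs_lt.1 this
      simp only [Set.mem_setOf_eq] at hθ ⊢
      linarith [this.2]
    calc hTfin.toFinset.inf' hTne g ≤ g t :=
          Finset.inf'_le g (hTfin.mem_toFinset.2 ht)
      _ ≤ _ := measure_mono hsub
  have hpos : 0 < hTfin.toFinset.inf' hTne g := by
    rw [Finset.lt_inf'_iff]
    intro t _
    exact hgpos t
  exact lt_of_lt_of_le hpos (le_iInf key)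
end

section
/- Suppose the set Θ* of equilibrium models is finite and write Θ* ∪ {0,1} = {θ_0 < θ_1 < … < θ_N}. Then for each n ∈ {0,…,N−1}, one of the following holds: (i) for every θ ∈ (θ_n, θ_{n+1}) and every x ∈ F(δ_θ), θ(δ_x) > θ; or (ii) for every θ ∈ (θ_n, θ_{n+1}) and every x ∈ F(δ_θ), θ(δ_x) < θ. -/
open MeasureTheory Filter Topology ENNReal

/-- The Dirac point mass as a probability measure. -/
noncomputable def diracPM {α : Type*} [MeasurableSpace α] (a : α) :
    MeasureTheory.ProbabilityMeasure α :=
  ⟨MeasureTheory.Measure.dirac a, inferInstance⟩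

lemma aux_ae_pos {Y : Type} [MeasurableSpace Y] (ν : Measure Y) (f : Y → ℝ)
    (μ : Measure Y) (hμ : μ = ν.withDensity fun y => ENNReal.ofReal (f y))
    (hp : IsProbabilityMeasure μ) : ∀ᵐ y ∂μ, 0 < f y := by
  obtain ⟨ψ, hψm, hψle, hψeq⟩ := exists_measurable_le_lintegral_eq ν
    (fun y => ENNReal.ofReal (f y))
  have ht0 : MeasurableSet {y | ψ y = 0} := hψm (measurableSet_singleton 0)
  have huniv : μ Set.univ = 1 := measure_univ
  have hμuniv : ∫⁻ y, ENNReal.ofReal (f y) ∂ν = 1 := by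
    rw [hμ] at huniv
    rwa [MeasureTheory.withDensity_apply _ MeasurableSet.univ,
      Measure.restrict_univ] at huniv
  have hz : ∫⁻ y in {y | ψ y = 0}, ψ y ∂ν = 0 := by
    have : ∀ᵐ y ∂(ν.restrict {y | ψ y = 0}), ψ y = 0 := by
      refine (ae_restrict_iff' ht0).mpr (Filter.Eventually.of_forall fun y hy => hy)
    calc ∫⁻ y in {y | ψ y = 0}, ψ y ∂ν = ∫⁻ _ in {y | ψ y = 0}, 0 ∂ν :=
          lintegral_congr_ae this
      _ = 0 := lintegral_zero
  have hψtot : ∫⁻ y, ψ y ∂ν = 1 := by rw [← hψeq]; exact hμuniv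
  have hsplit : ∫⁻ y in {y | ψ y = 0}, ψ y ∂ν + ∫⁻ y in {y | ψ y = 0}ᶜ, ψ y ∂ν = 1 := by
    rw [lintegral_add_compl _ ht0]; exact hψtot
  have hcompl_ge : (1:ℝ≥0∞) ≤ μ {y | ψ y = 0}ᶜ := by
    have h1 : ∫⁻ y in {y | ψ y = 0}ᶜ, ψ y ∂ν = 1 := by
      rw [hz, zero_add] at hsplit; exact hsplit
    have h2 : μ {y | ψ y = 0}ᶜ = ∫⁻ y in {y | ψ y = 0}ᶜ, ENNReal.ofReal (f y) ∂ν := by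
      rw [hμ, MeasureTheory.withDensity_apply _ ht0.compl]
    rw [h2, ← h1]
    exact lintegral_mono fun y => hψle y
  have hzero : μ {y | ψ y = 0} = 0 := by
    have hadd : μ {y | ψ y = 0} + μ {y | ψ y = 0}ᶜ = 1 := by
      rw [measure_add_measure_compl ht0]; exact measure_univ
    have hle1 : μ {y | ψ y = 0}ᶜ ≤ 1 := prob_le_one
    have hc : μ {y | ψ y = 0}ᶜ = 1 := le_antisymm hle1 hcompl_ge
    rw [hc] at hadd
    have : μ {y | ψ y = 0} + 1 = 0 + 1 := by simpa using hadd
    exact (ENNReal.add_left_inj (by simp)).mp this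
  rw [ae_iff]
  refine measure_mono_null ?_ hzero
  intro y hy
  simp only [Set.mem_setOf_eq, not_lt] at hy ⊢
  have : ENNReal.ofReal (f y) = 0 := by simpa using ENNReal.ofReal_eq_zero.mpr hy
  have h2 := hψle y
  simp only [this] at h2
  exact le_antisymm h2 zero_le

lemma aux_log_contOn {φ : ℝ → ℝ} {qv gv : ℝ} (hq : 0 < qv)
    (hφ : ContinuousOn φ (Set.Icc 0 1))
    (hd : ∀ s ∈ Set.Icc (0:ℝ) 1, |Real.log (qv / φ s)| ≤ gv) :
    ContinuousOn (fun s => Real.log (qv / φ s)) (Set.Icc 0 1) := by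
  set c := qv * Real.exp (-gv) with hc
  have hcpos : 0 < c := by positivity
  have hdich : ∀ s ∈ Set.Icc (0:ℝ) 1, φ s = 0 ∨ c ≤ |φ s| := by
    intro s hs
    rcases eq_or_ne (φ s) 0 with h | h
    · exact Or.inl h
    · right
      have hφpos : 0 < |φ s| := abs_pos.mpr h
      have ht : |qv / φ s| = qv / |φ s| := by rw [abs_div, abs_of_pos hq]
      have htpos : 0 < |qv / φ s| := by rw [ht]; positivity
      have h1 : Real.log |qv / φ s| ≤ gv := by
        have h0 := hd s hs
        rw [← Real.log_abs] at h0
        exact (abs_le.mp h0).2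
      have h2 : |qv / φ s| ≤ Real.exp gv := (Real.log_le_iff_le_exp htpos).mp h1
      rw [ht, div_le_iff₀ hφpos] at h2
      rw [hc, Real.exp_neg]
      rw [mul_inv_le_iff₀ (Real.exp_pos gv)]
      linarith
  by_cases hz : ∃ s₀ ∈ Set.Icc (0:ℝ) 1, φ s₀ = 0
  · obtain ⟨s₀, hs₀, hz₀⟩ := hz
    have hall : ∀ s ∈ Set.Icc (0:ℝ) 1, φ s = 0 := by
      intro s hs
      by_contra h
      have h1 : c ≤ |φ s| := (hdich s hs).resolve_left h
      have hsub : Set.uIcc s₀ s ⊆ Set.Icc (0:ℝ) 1 :=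
        Set.ordConnected_Icc.uIcc_subset hs₀ hs
      have hcont2 : ContinuousOn (fun u => |φ u|) (Set.uIcc s₀ s) := (hφ.mono hsub).abs
      have hmem : c/2 ∈ Set.uIcc (|φ s₀|) (|φ s|) := by
        rw [hz₀, abs_zero, Set.mem_uIcc]
        left; constructor <;> linarith
      obtain ⟨u, hu, huv⟩ := intermediate_value_uIcc hcont2 hmem
      simp only [] at huv
      rcases hdich u (hsub hu) with h' | h'
      · rw [h', abs_zero] at huv; linarith
      · rw [huv] at h'; linarith
    refine (continuousOn_const (c := (0:ℝ))).congr fun s hs => ?_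
    rw [hall s hs, _root_.div_zero, Real.log_zero]
  · push_neg at hz
    intro s hs
    have hφc : ContinuousWithinAt φ (Set.Icc 0 1) s := hφ s hs
    have hdiv : ContinuousWithinAt (fun u => qv / φ u) (Set.Icc 0 1) s :=
      continuousWithinAt_const.div hφc (hz s hs)
    exact hdiv.log (div_ne_zero hq.ne' (hz s hs))

lemma aux_endpoint {Y : Type} [MeasurableSpace Y] (μ : Measure Y) [IsProbabilityMeasure μ]
    (h : ℝ → Y → ℝ) (g : Y → ℝ) (hg : Integrable g μ)
    (hcont : ∀ᵐ y ∂μ, ContinuousOn (fun s => h s y) (Set.Icc 0 1))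
    (hbd : ∀ᵐ y ∂μ, ∀ s ∈ Set.Icc (0:ℝ) 1, |h s y| ≤ g y)
    (a : ℝ → ℝ) (ha : ∀ s, a s = ∫ y, h s y ∂μ)
    (hacont : ContinuousOn a (Set.Ioo 0 1))
    (e : ℝ) (he : e = 0 ∨ e = 1) :
    Tendsto a (𝓝[Set.Ioo (0:ℝ) 1] e) (𝓝 (a e)) ∨
      (∀ᶠ s in 𝓝[Set.Ioo (0:ℝ) 1] e, a s = 0) := by
  have he_icc : e ∈ Set.Icc (0:ℝ) 1 := by rcases he with h | h <;> simp [h]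
  set L := 𝓝[Set.Ioo (0:ℝ) 1] e with hL
  -- the key dominated convergence statement
  have key : ∀ v : ℕ → ℝ, Tendsto v atTop L → (∀ k, Integrable (h (v k)) μ) →
      Tendsto (fun k => a (v k)) atTop (𝓝 (a e)) := by
    intro v hvL hvI
    have hmem : ∀ᶠ k in atTop, v k ∈ Set.Ioo (0:ℝ) 1 :=
      (tendsto_nhdsWithin_iff.mp hvL).2
    have hvIcc : Tendsto v atTop (𝓝[Set.Icc (0:ℝ) 1] e) :=
      hvL.mono_right (nhdsWithin_mono e Set.Ioo_subset_Icc_self)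
    have hptw : ∀ᵐ y ∂μ, Tendsto (fun k => h (v k) y) atTop (𝓝 (h e y)) := by
      filter_upwards [hcont] with y hy
      exact (hy e he_icc).tendsto.comp hvIcc
    have hlim : Tendsto (fun k => ∫ y, h (v k) y ∂μ) atTop (𝓝 (∫ y, h e y ∂μ)) := by
      refine tendsto_integral_filter_of_dominated_convergence g ?_ ?_ hg hptw
      · exact Filter.Eventually.of_forall fun k => (hvI k).aestronglyMeasurable
      · filter_upwards [hmem] with k hk
        filter_upwards [hbd] with y hy
        rw [Real.norm_eq_abs]
        exact hy (v k) (Set.Ioo_subset_Icc_self hk)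
    simpa only [← ha] using hlim
  by_cases hM : ∃ᶠ s in L, Integrable (h s) μ
  · left
    by_contra hT
    rw [Metric.tendsto_nhds] at hT
    push_neg at hT
    obtain ⟨ε, hε, hbad⟩ := hT
    have hbad' : ∃ᶠ s in L, ε ≤ dist (a s) (a e) := hbad
    -- a sequence with integrable slices
    obtain ⟨u, huL, huI⟩ := Filter.exists_seq_forall_of_frequently hM
    have hulim : Tendsto (fun k => a (u k)) atTop (𝓝 (a e)) := key u huL huI
    -- a bad sequence
    obtain ⟨sb, hsbL, hsbbad⟩ := Filter.exists_seq_forall_of_frequently hbad'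
    have hsb_not_int : ∀ᶠ j in atTop, ¬ Integrable (h (sb j)) μ := by
      by_contra hcon
      rw [Filter.not_eventually] at hcon
      have hcon' : ∃ᶠ j in atTop, Integrable (h (sb j)) μ :=
        hcon.mono fun j hj => not_not.mp hj
      obtain ⟨φ, hφmono, hφI⟩ := Filter.extraction_of_frequently_atTop hcon'
      have hconv : Tendsto (fun j => a (sb (φ j))) atTop (𝓝 (a e)) :=
        key (sb ∘ φ) (hsbL.comp hφmono.tendsto_atTop) hφI
      have := (Metric.tendsto_nhds.mp hconv ε hε).exists
      obtain ⟨j, hj⟩ := this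
      exact absurd (hsbbad (φ j)) (not_le.mpr hj)
    have hsb_zero : ∀ᶠ j in atTop, a (sb j) = 0 := by
      filter_upwards [hsb_not_int] with j hj
      rw [ha]; exact integral_undef hj
    have hae_ne : a e ≠ 0 := by
      obtain ⟨j, hj0⟩ := hsb_zero.exists
      have := hsbbad j
      rw [hj0, Real.dist_eq, zero_sub, abs_neg] at this
      intro hcontra; rw [hcontra, abs_zero] at this; linarith
    -- frequently zero values in L
    have hfz : ∃ᶠ s in L, a s = 0 := hsbL.frequently hsb_zero.frequently
    -- frequently values close to a e in L
    have hfc : ∃ᶠ s in L, |a s - a e| < |a e| / 2 := by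
      have hev : ∀ᶠ k in atTop, |a (u k) - a e| < |a e| / 2 := by
        have := Metric.tendsto_nhds.mp hulim (|a e| / 2) (by positivity)
        filter_upwards [this] with k hk
        rwa [Real.dist_eq] at hk
      exact huL.frequently hev.frequently
    -- construct the intermediate sequence
    have hτ : ∀ δ : ℝ, 0 < δ → ∃ τ, τ ∈ Set.Ioo (0:ℝ) 1 ∧ |τ - e| ≤ δ ∧ a τ = a e / 2 := by
      intro δ hδ
      have hball : Metric.ball e δ ∩ Set.Ioo (0:ℝ) 1 ∈ L := by
        rw [hL, mem_nhdsWithin]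
        exact ⟨Metric.ball e δ, Metric.isOpen_ball, Metric.mem_ball_self hδ,
          fun x hx => ⟨hx.1, hx.2⟩⟩
      obtain ⟨s₁, hs₁p, hs₁m⟩ := (hfz.and_eventually (eventually_of_mem hball (fun x hx => hx))).exists
      obtain ⟨s₂, hs₂p, hs₂m⟩ := (hfc.and_eventually (eventually_of_mem hball (fun x hx => hx))).exists
      have hsub : Set.uIcc s₁ s₂ ⊆ Set.Ioo (0:ℝ) 1 :=
        Set.ordConnected_Ioo.uIcc_subset hs₁m.2 hs₂m.2
      have hmem : a e / 2 ∈ Set.uIcc (a s₁) (a s₂) := by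
        rw [hs₁p, Set.mem_uIcc]
        rcases le_or_gt 0 (a e) with hpos | hneg
        · have habs : |a e| = a e := abs_of_nonneg hpos
          rw [habs] at hs₂p
          have := abs_lt.mp hs₂p
          left; constructor <;> linarith
        · have habs : |a e| = -(a e) := abs_of_neg hneg
          rw [habs] at hs₂p
          have := abs_lt.mp hs₂p
          right; constructor <;> linarith
      obtain ⟨τ, hτm, hτv⟩ := intermediate_value_uIcc (hacont.mono hsub) hmem
      refine ⟨τ, hsub hτm, ?_, hτv⟩
      have h1 : |s₁ - e| < δ := by
        have := hs₁m.1; rwa [Metric.mem_ball, Real.dist_eq] at this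
      have h2 : |s₂ - e| < δ := by
        have := hs₂m.1; rwa [Metric.mem_ball, Real.dist_eq] at this
      have h1' := abs_lt.mp h1
      have h2' := abs_lt.mp h2
      rcases Set.mem_uIcc.mp hτm with ⟨hl, hr⟩ | ⟨hl, hr⟩ <;>
        · rw [abs_le]; constructor <;> linarith
    choose τ hτI hτd hτv using fun m : ℕ => hτ (1/(m+1)) (by positivity)
    have hτlim : Tendsto τ atTop (𝓝 e) := by
      have hz : Tendsto (fun m : ℕ => τ m - e) atTop (𝓝 0) := by
        apply squeeze_zero_norm (fun m => ?_) tendsto_one_div_add_atTop_nhds_zero_nat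
        rw [Real.norm_eq_abs]; exact hτd m
      have := hz.add (tendsto_const_nhds (x := e))
      simpa using this
    have hτL : Tendsto τ atTop L := by
      rw [hL, tendsto_nhdsWithin_iff]
      exact ⟨hτlim, Filter.Eventually.of_forall hτI⟩
    have hτint : ∀ m, Integrable (h (τ m)) μ := by
      intro m
      by_contra hni
      have : a (τ m) = 0 := by rw [ha]; exact integral_undef hni
      rw [hτv m] at this
      exact hae_ne (by linarith)
    have hconv := key τ hτL hτint
    have hconv2 : Tendsto (fun _ : ℕ => a e / 2) atTop (𝓝 (a e)) := by
      refine hconv.congr fun m => hτv m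
    have := tendsto_nhds_unique hconv2 tendsto_const_nhds
    exact hae_ne (by linarith)
  · right
    rw [Filter.not_frequently] at hM
    filter_upwards [hM] with s hs
    rw [ha]
    exact integral_undef fun hint => hs hint

lemma aux_core (a b : ℝ → ℝ) (Ca Cb : ℝ) (m : ℝ → ℝ) (θ : ℝ)
    (hθ : θ ∈ Set.Ioo (0:ℝ) 1)
    (hm : ∀ t ∈ Set.Icc (0:ℝ) 1, m t ∈ Set.Icc (0:ℝ) 1)
    (huniq : ∀ t ∈ Set.Icc (0:ℝ) 1, ∀ s ∈ Set.Icc (0:ℝ) 1, s ≠ m t →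
      t * a (m t) + (1-t) * b (m t) < t * a s + (1-t) * b s)
    (haC : ∀ s ∈ Set.Icc (0:ℝ) 1, |a s| ≤ Ca) (hbC : ∀ s ∈ Set.Icc (0:ℝ) 1, |b s| ≤ Cb)
    (hacont : ContinuousOn a (Set.Ioo 0 1)) (hbcont : ContinuousOn b (Set.Ioo 0 1))
    (haend : Tendsto a (𝓝[Set.Ioo (0:ℝ) 1] 0) (𝓝 (a 0)) ∨
      (∀ᶠ s in 𝓝[Set.Ioo (0:ℝ) 1] 0, a s = 0))
    (hbend : Tendsto b (𝓝[Set.Ioo (0:ℝ) 1] 0) (𝓝 (b 0)) ∨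
      (∀ᶠ s in 𝓝[Set.Ioo (0:ℝ) 1] 0, b s = 0))
    (tstar : ℝ) (hts : tstar ∈ Set.Icc (0:ℝ) 1) (hmts : θ < m tstar)
    (tk : ℕ → ℝ) (htk : ∀ k, tk k ∈ Set.Ioo (0:ℝ) 1)
    (htkt : Tendsto tk atTop (𝓝 tstar))
    (hmtk : ∀ k, m (tk k) < θ) : False := by
  classical
  set L := 𝓝[Set.Ioo (0:ℝ) 1] (0:ℝ) with hLdef
  set κ : ℝ → ℝ → ℝ := fun t s => t * a s + (1-t) * b s with hκdef
  set w := m tstar with hwdef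
  have hw_icc : w ∈ Set.Icc (0:ℝ) 1 := hm tstar hts
  set V := κ tstar w with hVdef
  have htkicc : ∀ k, tk k ∈ Set.Icc (0:ℝ) 1 := fun k => Set.Ioo_subset_Icc_self (htk k)
  -- uniform bound helpers
  have hCa0 : 0 ≤ Ca := le_trans (abs_nonneg _) (haC 0 ⟨le_refl _, zero_le_one⟩)
  have hCb0 : 0 ≤ Cb := le_trans (abs_nonneg _) (hbC 0 ⟨le_refl _, zero_le_one⟩)
  -- the main estimate
  have hest : ∀ k, κ tstar (m (tk k)) ≤ κ (tk k) w + |tstar - tk k| * (Ca + Cb) := by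
    intro k
    have hu_icc : m (tk k) ∈ Set.Icc (0:ℝ) 1 := hm (tk k) (htkicc k)
    have h1 : κ (tk k) (m (tk k)) ≤ κ (tk k) w := by
      rcases eq_or_ne w (m (tk k)) with he | hne
      · rw [he]
      · exact (huniq (tk k) (htkicc k) w hw_icc hne).le
    have h2 : κ tstar (m (tk k)) - κ (tk k) (m (tk k)) ≤ |tstar - tk k| * (Ca + Cb) := by
      have heq : κ tstar (m (tk k)) - κ (tk k) (m (tk k))
          = (tstar - tk k) * (a (m (tk k)) - b (m (tk k))) := by
        simp only [hκdef]; ring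
      rw [heq]
      calc (tstar - tk k) * (a (m (tk k)) - b (m (tk k)))
          ≤ |(tstar - tk k) * (a (m (tk k)) - b (m (tk k)))| := le_abs_self _
        _ = |tstar - tk k| * |a (m (tk k)) - b (m (tk k))| := abs_mul _ _
        _ ≤ |tstar - tk k| * (Ca + Cb) := by
            apply mul_le_mul_of_nonneg_left _ (abs_nonneg _)
            calc |a (m (tk k)) - b (m (tk k))|
                ≤ |a (m (tk k))| + |b (m (tk k))| := abs_sub _ _
              _ ≤ Ca + Cb := add_le_add (haC _ hu_icc) (hbC _ hu_icc)
    linarith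
  -- the right side converges to V
  have hR : Tendsto (fun k => κ (tk k) w + |tstar - tk k| * (Ca + Cb)) atTop (𝓝 V) := by
    have h1 : Tendsto (fun k => κ (tk k) w) atTop (𝓝 V) := by
      simp only [hκdef, hVdef]
      exact (htkt.mul_const (a w)).add ((tendsto_const_nhds.sub htkt).mul_const (b w))
    have h2 : Tendsto (fun k => |tstar - tk k| * (Ca + Cb)) atTop (𝓝 0) := by
      have : Tendsto (fun k => tstar - tk k) atTop (𝓝 0) := by
        simpa using (tendsto_const_nhds (x := tstar)).sub htkt
      simpa using (this.abs.mul_const (Ca + Cb))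
    simpa using h1.add h2
  -- extract a convergent subsequence of the minimizers
  obtain ⟨ubar, hubar_icc, φ, hφmono, hφconv⟩ :=
    (isCompact_Icc (a := (0:ℝ)) (b := 1)).tendsto_subseq (fun k => hm (tk k) (htkicc k))
  -- rename: work with the subsequence
  set tk' : ℕ → ℝ := tk ∘ φ with htk'def
  have htk' : ∀ k, tk' k ∈ Set.Ioo (0:ℝ) 1 := fun k => htk (φ k)
  have htk'icc : ∀ k, tk' k ∈ Set.Icc (0:ℝ) 1 := fun k => htkicc (φ k)
  have htk't : Tendsto tk' atTop (𝓝 tstar) := htkt.comp hφmono.tendsto_atTop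
  have hmtk' : ∀ k, m (tk' k) < θ := fun k => hmtk (φ k)
  have hest' : ∀ k, κ tstar (m (tk' k)) ≤ κ (tk' k) w + |tstar - tk' k| * (Ca + Cb) :=
    fun k => hest (φ k)
  have hR' : Tendsto (fun k => κ (tk' k) w + |tstar - tk' k| * (Ca + Cb)) atTop (𝓝 V) :=
    hR.comp hφmono.tendsto_atTop
  have huconv : Tendsto (fun k => m (tk' k)) atTop (𝓝 ubar) := hφconv
  have hubar_le : ubar ≤ θ := le_of_tendsto huconv
    (Filter.Eventually.of_forall fun k => (hmtk' k).le)
  -- no interior cluster point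
  have hubar0 : ubar = 0 := by
    by_contra hne
    have hpos : 0 < ubar := lt_of_le_of_ne hubar_icc.1 (Ne.symm hne)
    have hioo : ubar ∈ Set.Ioo (0:ℝ) 1 := ⟨hpos, lt_of_le_of_lt hubar_le hθ.2⟩
    have hconta : ContinuousAt a ubar := hacont.continuousAt (Ioo_mem_nhds hioo.1 hioo.2)
    have hcontb : ContinuousAt b ubar := hbcont.continuousAt (Ioo_mem_nhds hioo.1 hioo.2)
    have hconv2 : Tendsto (fun k => κ tstar (m (tk' k))) atTop (𝓝 (κ tstar ubar)) := by
      simp only [hκdef]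
      exact ((hconta.tendsto.comp huconv).const_mul tstar).add
        ((hcontb.tendsto.comp huconv).const_mul (1 - tstar))
    have hle : κ tstar ubar ≤ V := le_of_tendsto_of_tendsto' hconv2 hR' hest'
    have hneq : ubar ≠ w := by intro hc; rw [hc] at hubar_le; linarith
    have := huniq tstar hts ubar hubar_icc hneq
    simp only [hVdef, hwdef, hκdef] at hle
    linarith
  rw [hubar0] at huconv
  -- case: frequently the minimizer hits 0 exactly
  by_cases hz : ∀ᶠ k in atTop, m (tk' k) ≠ 0
  · -- minimizers are eventually interior
    have hioo : ∀ᶠ k in atTop, m (tk' k) ∈ Set.Ioo (0:ℝ) 1 := by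
      filter_upwards [hz] with k hk
      have := hm (tk' k) (htk'icc k)
      exact ⟨lt_of_le_of_ne this.1 (Ne.symm hk), lt_of_lt_of_le (hmtk' k) hθ.2.le⟩
    have hukL : Tendsto (fun k => m (tk' k)) atTop L := by
      rw [hLdef, tendsto_nhdsWithin_iff]
      exact ⟨huconv, hioo⟩
    rcases haend with hA | hae
    · rcases hbend with hB | hbe
      · -- both endpoint limits equal the endpoint values : contradiction via uniqueness at 0
        have hκ0 : Tendsto (fun s => κ tstar s) L (𝓝 (κ tstar 0)) := by
          simp only [hκdef]
          exact (hA.const_mul tstar).add (hB.const_mul (1 - tstar))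
        have hconv2 : Tendsto (fun k => κ tstar (m (tk' k))) atTop (𝓝 (κ tstar 0)) :=
          hκ0.comp hukL
        have hle : κ tstar 0 ≤ V := le_of_tendsto_of_tendsto' hconv2 hR' hest'
        have hneq : (0:ℝ) ≠ w := by intro hc; rw [← hc] at hmts; linarith [hθ.1]
        have := huniq tstar hts 0 ⟨le_refl _, zero_le_one⟩ hneq
        simp only [hVdef, hwdef, hκdef] at hle
        linarith
      · -- b vanishes near 0 : distinct-minimizer trick using a
        have hbz : ∀ᶠ k in atTop, b (m (tk' k)) = 0 := hukL.eventually hbe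
        obtain ⟨k₁, hk₁⟩ := (hbz.and hioo).exists_forall_of_atTop
        have hconst : ∀ k, k₁ ≤ k → ∀ j, k₁ ≤ j → m (tk' k) = m (tk' j) := by
          intro k hk j hj
          by_contra hne
          have h1 := huniq (tk' k) (htk'icc k) (m (tk' j)) (hm (tk' j) (htk'icc j))
            (Ne.symm hne)
          have h2 := huniq (tk' j) (htk'icc j) (m (tk' k)) (hm (tk' k) (htk'icc k)) hne
          rw [(hk₁ k hk).1, (hk₁ j hj).1] at h1 h2
          have hp1 : 0 < tk' k := (htk' k).1
          have hp2 : 0 < tk' j := (htk' j).1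
          nlinarith [h1, h2]
        have hlim : Tendsto (fun k => m (tk' k)) atTop (𝓝 (m (tk' k₁))) := by
          refine Tendsto.congr' ?_ (tendsto_const_nhds (x := m (tk' k₁)))
          filter_upwards [eventually_ge_atTop k₁] with k hk
          exact (hconst k₁ le_rfl k hk)
        have h0 := tendsto_nhds_unique hlim huconv
        exact absurd h0 (hk₁ k₁ le_rfl).2.1.ne'
    · -- a vanishes near 0 : distinct-minimizer trick using b
      have haz : ∀ᶠ k in atTop, a (m (tk' k)) = 0 := hukL.eventually hae
      obtain ⟨k₁, hk₁⟩ := (haz.and hioo).exists_forall_of_atTop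
      have hconst : ∀ k, k₁ ≤ k → ∀ j, k₁ ≤ j → m (tk' k) = m (tk' j) := by
        intro k hk j hj
        by_contra hne
        have h1 := huniq (tk' k) (htk'icc k) (m (tk' j)) (hm (tk' j) (htk'icc j))
          (Ne.symm hne)
        have h2 := huniq (tk' j) (htk'icc j) (m (tk' k)) (hm (tk' k) (htk'icc k)) hne
        rw [(hk₁ k hk).1, (hk₁ j hj).1] at h1 h2
        have hp1 : tk' k < 1 := (htk' k).2
        have hp2 : tk' j < 1 := (htk' j).2
        nlinarith [h1, h2]
      have hlim : Tendsto (fun k => m (tk' k)) atTop (𝓝 (m (tk' k₁))) := by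
        refine Tendsto.congr' ?_ (tendsto_const_nhds (x := m (tk' k₁)))
        filter_upwards [eventually_ge_atTop k₁] with k hk
        exact (hconst k₁ le_rfl k hk)
      have h0 := tendsto_nhds_unique hlim huconv
      exact absurd h0 (hk₁ k₁ le_rfl).2.1.ne'
  · -- frequently the minimizer is 0
    rw [Filter.not_eventually] at hz
    have hfreq : ∃ᶠ k in atTop, m (tk' k) = 0 := hz.mono fun k hk => not_not.mp hk
    have hle : κ tstar 0 ≤ V := by
      by_contra hlt
      push_neg at hlt
      have hev : ∀ᶠ k in atTop,
          κ (tk' k) w + |tstar - tk' k| * (Ca + Cb) < κ tstar 0 :=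
        hR'.eventually_lt_const hlt
      obtain ⟨k, hk0, hklt⟩ := (hfreq.and_eventually hev).exists
      have := hest' k
      rw [hk0] at this
      linarith
    have hneq : (0:ℝ) ≠ w := by intro hc; rw [← hc] at hmts; linarith [hθ.1]
    have := huniq tstar hts 0 ⟨le_refl _, zero_le_one⟩ hneq
    simp only [hVdef, hwdef, hκdef] at hle
    linarith

lemma aux_seg (a b : ℝ → ℝ) (Ca Cb : ℝ) (m : ℝ → ℝ) (θ : ℝ)
    (hθ : θ ∈ Set.Ioo (0:ℝ) 1)
    (hm : ∀ t ∈ Set.Icc (0:ℝ) 1, m t ∈ Set.Icc (0:ℝ) 1)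
    (huniq : ∀ t ∈ Set.Icc (0:ℝ) 1, ∀ s ∈ Set.Icc (0:ℝ) 1, s ≠ m t →
      t * a (m t) + (1-t) * b (m t) < t * a s + (1-t) * b s)
    (haC : ∀ s ∈ Set.Icc (0:ℝ) 1, |a s| ≤ Ca) (hbC : ∀ s ∈ Set.Icc (0:ℝ) 1, |b s| ≤ Cb)
    (hacont : ContinuousOn a (Set.Ioo 0 1)) (hbcont : ContinuousOn b (Set.Ioo 0 1))
    (haend : ∀ e : ℝ, e = 0 ∨ e = 1 →
      Tendsto a (𝓝[Set.Ioo (0:ℝ) 1] e) (𝓝 (a e)) ∨ (∀ᶠ s in 𝓝[Set.Ioo (0:ℝ) 1] e, a s = 0))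
    (hbend : ∀ e : ℝ, e = 0 ∨ e = 1 →
      Tendsto b (𝓝[Set.Ioo (0:ℝ) 1] e) (𝓝 (b e)) ∨ (∀ᶠ s in 𝓝[Set.Ioo (0:ℝ) 1] e, b s = 0))
    (h0 : m 0 < θ) (h1 : θ < m 1) :
    ∃ t ∈ Set.Icc (0:ℝ) 1, m t = θ := by
  by_contra hcon
  push_neg at hcon
  set T := {t : ℝ | t ∈ Set.Icc (0:ℝ) 1 ∧ θ < m t} with hT
  have h1T : (1:ℝ) ∈ T := ⟨⟨zero_le_one, le_refl _⟩, h1⟩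
  have hTne : T.Nonempty := ⟨1, h1T⟩
  have hbdd : BddBelow T := ⟨0, fun t ht => ht.1.1⟩
  set tstar := sInf T with htstar
  have hts0 : 0 ≤ tstar := le_csInf hTne fun t ht => ht.1.1
  have hts1 : tstar ≤ 1 := csInf_le hbdd h1T
  have htsIcc : tstar ∈ Set.Icc (0:ℝ) 1 := ⟨hts0, hts1⟩
  rcases (hcon tstar htsIcc).lt_or_gt with hlt | hgt
  · -- m tstar < θ : approach from above within T, flip the interval
    have hts_lt1 : tstar < 1 := by
      rcases lt_or_eq_of_le hts1 with h | h
      · exact h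
      · exfalso; rw [h] at hlt; linarith
    have hnotT : tstar ∉ T := fun hc => absurd hc.2 (not_lt.mpr hlt.le)
    -- construct the approaching sequence
    have hseq : ∀ k : ℕ, ∃ s, s ∈ T ∧ s < tstar + 1/(k+1) := by
      intro k
      have hpos : (0:ℝ) < 1/(k+1) := by positivity
      have : sInf T < tstar + 1/(k+1) := by rw [← htstar] at *; linarith
      obtain ⟨s, hsT, hs⟩ := (csInf_lt_iff hbdd hTne).mp this
      exact ⟨s, hsT, hs⟩
    choose sk hskT hsklt using hseq
    have hskge : ∀ k, tstar ≤ sk k := fun k => csInf_le hbdd (hskT k)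
    have hskgt : ∀ k, tstar < sk k := by
      intro k
      rcases lt_or_eq_of_le (hskge k) with h | h
      · exact h
      · exact absurd (h ▸ hskT k) hnotT
    have hsktend : Tendsto sk atTop (𝓝 tstar) := by
      have hup : Tendsto (fun k : ℕ => tstar + 1/(k+1)) atTop (𝓝 tstar) := by
        have : Tendsto (fun n : ℕ => 1 / ((n : ℝ) + 1)) atTop (𝓝 0) := tendsto_one_div_add_atTop_nhds_zero_nat
        simpa using (tendsto_const_nhds (x := tstar)).add this
      exact tendsto_of_tendsto_of_tendsto_of_le_of_le tendsto_const_nhds hup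
        (fun k => (hskge k)) (fun k => (hsklt k).le)
    -- eventually sk k < 1
    have hsk_lt1 : ∀ᶠ k in atTop, sk k < 1 := by
      have : ∀ᶠ k in atTop, sk k ∈ Set.Iio (1:ℝ) :=
        hsktend.eventually (Iio_mem_nhds hts_lt1)
      exact this
    obtain ⟨k₀, hk₀⟩ := hsk_lt1.exists_forall_of_atTop
    set sk' : ℕ → ℝ := fun k => sk (k + k₀) with hsk'
    have hsk'T : ∀ k, sk' k ∈ T := fun k => hskT (k + k₀)
    have hsk'Ioo : ∀ k, sk' k ∈ Set.Ioo (0:ℝ) 1 := by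
      intro k
      exact ⟨lt_of_le_of_lt hts0 (hskgt (k + k₀)), hk₀ (k + k₀) (Nat.le_add_left _ _)⟩
    have hsk'tend : Tendsto sk' atTop (𝓝 tstar) := by
      rw [hsk']
      exact hsktend.comp (tendsto_add_atTop_nat k₀)
    -- flip everything
    have hflip : Tendsto (fun s : ℝ => 1 - s) (𝓝[Set.Ioo (0:ℝ) 1] (0:ℝ))
        (𝓝[Set.Ioo (0:ℝ) 1] (1:ℝ)) := by
      rw [tendsto_nhdsWithin_iff]
      constructor
      · have : Tendsto (fun s : ℝ => 1 - s) (𝓝 0) (𝓝 (1 - 0)) :=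
          (tendsto_const_nhds.sub tendsto_id)
        simpa using this.mono_left nhdsWithin_le_nhds
      · filter_upwards [self_mem_nhdsWithin] with s hs
        refine ⟨?_, ?_⟩
        · show (0:ℝ) < 1 - s; linarith [hs.2]
        · show (1:ℝ) - s < 1; linarith [hs.1]
    have hmapIcc : ∀ s : ℝ, s ∈ Set.Icc (0:ℝ) 1 → 1 - s ∈ Set.Icc (0:ℝ) 1 := by
      intro s hs; exact ⟨by linarith [hs.2], by linarith [hs.1]⟩
    have hmapIoo : Set.MapsTo (fun s : ℝ => 1 - s) (Set.Ioo (0:ℝ) 1) (Set.Ioo (0:ℝ) 1) := by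
      intro s hs
      refine ⟨?_, ?_⟩
      · show (0:ℝ) < 1 - s; linarith [hs.2]
      · show (1:ℝ) - s < 1; linarith [hs.1]
    have hcont1s : Continuous (fun s : ℝ => 1 - s) := continuous_const.sub continuous_id
    refine aux_core (fun s => a (1-s)) (fun s => b (1-s)) Ca Cb (fun t => 1 - m t) (1 - θ)
      ⟨by linarith [hθ.2], by linarith [hθ.1]⟩
      (fun t ht => hmapIcc _ (hm t ht))
      ?_ (fun s hs => haC _ (hmapIcc s hs)) (fun s hs => hbC _ (hmapIcc s hs))
      (hacont.comp hcont1s.continuousOn hmapIoo) (hbcont.comp hcont1s.continuousOn hmapIoo)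
      ?_ ?_ tstar htsIcc (show 1 - θ < 1 - m tstar by linarith) sk' hsk'Ioo hsk'tend ?_
    · -- uniqueness transfers
      intro t ht s hs hne
      have h1ms : 1 - s ∈ Set.Icc (0:ℝ) 1 := hmapIcc s hs
      have hne' : 1 - s ≠ m t := by
        intro hc; apply hne; show s = 1 - m t; linarith
      have := huniq t ht (1-s) h1ms hne'
      show t * a (1 - (1 - m t)) + (1 - t) * b (1 - (1 - m t)) < t * a (1-s) + (1-t) * b (1-s)
      have hmm : 1 - (1 - m t) = m t := by ring
      rw [hmm]
      exact this
    · -- endpoint for flipped a at 0 = endpoint of a at 1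
      rcases haend 1 (Or.inr rfl) with hA | hae
      · left
        have : (fun s : ℝ => a (1 - s)) 0 = a 1 := by norm_num
        rw [sub_zero]
        exact hA.comp hflip
      · right
        exact hflip.eventually hae
    · rcases hbend 1 (Or.inr rfl) with hB | hbe
      · left
        have : (fun s : ℝ => b (1 - s)) 0 = b 1 := by norm_num
        rw [sub_zero]
        exact hB.comp hflip
      · right
        exact hflip.eventually hbe
    · -- flipped minimizers below flipped θ
      intro k
      have := (hsk'T k).2
      show 1 - m (sk' k) < 1 - θ
      linarith
  · -- θ < m tstar : approach from below
    have hts_pos : 0 < tstar := by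
      rcases lt_or_eq_of_le hts0 with h | h
      · exact h
      · exfalso; rw [← h] at hgt; linarith
    set tk : ℕ → ℝ := fun k => tstar - tstar/(k+2) with htk
    have htkIoo : ∀ k, tk k ∈ Set.Ioo (0:ℝ) 1 := by
      intro k
      have hk0 : (0:ℝ) ≤ (k:ℝ) := Nat.cast_nonneg k
      have h2 : (1:ℝ) < (k:ℝ)+2 := by linarith
      have hlt : tstar/((k:ℝ)+2) < tstar := div_lt_self hts_pos h2
      have hpos : 0 < tstar/((k:ℝ)+2) := by positivity
      refine ⟨?_, ?_⟩
      · show (0:ℝ) < tstar - tstar/((k:ℝ)+2); linarith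
      · show tstar - tstar/((k:ℝ)+2) < 1; linarith
    have htklt : ∀ k, tk k < tstar := by
      intro k
      have hpos : 0 < tstar/((k:ℝ)+2) := by positivity
      show tstar - tstar/((k:ℝ)+2) < tstar
      linarith
    have htktend : Tendsto tk atTop (𝓝 tstar) := by
      have hdiv : Tendsto (fun k : ℕ => tstar/((k:ℝ)+2)) atTop (𝓝 0) := by
        apply Tendsto.div_atTop (tendsto_const_nhds (x := tstar))
        exact tendsto_atTop_add_const_right atTop 2 tendsto_natCast_atTop_atTop
      have := (tendsto_const_nhds (x := tstar)).sub hdiv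
      simpa using this
    have htkm : ∀ k, m (tk k) < θ := by
      intro k
      have hnotT : tk k ∉ T := notMem_of_lt_csInf (htklt k) hbdd
      have hIcc : tk k ∈ Set.Icc (0:ℝ) 1 :=
        ⟨(htkIoo k).1.le, (htkIoo k).2.le⟩
      have hne := hcon (tk k) hIcc
      by_contra hge
      push_neg at hge
      exact hnotT ⟨hIcc, lt_of_le_of_ne hge (Ne.symm hne)⟩
    exact aux_core a b Ca Cb m θ hθ hm huniq haC hbC hacont hbcont
      (haend 0 (Or.inl rfl)) (hbend 0 (Or.inl rfl)) tstar htsIcc hgt tk htkIoo htktend htkm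

lemma aux_dirac_cont : Continuous fun p : Set.Icc (0:ℝ) 1 => diracPM p := by
  rw [continuous_iff_continuousAt]
  intro p
  unfold ContinuousAt
  rw [ProbabilityMeasure.tendsto_iff_forall_integral_tendsto]
  intro f
  have hint : ∀ r : Set.Icc (0:ℝ) 1, ∫ ω, f ω ∂((diracPM r : ProbabilityMeasure _) : Measure _) = f r := by
    intro r
    have : ((diracPM r : ProbabilityMeasure _) : Measure (Set.Icc (0:ℝ) 1)) =
        Measure.dirac r := rfl
    rw [this]
    exact integral_dirac' _ r f.continuous.stronglyMeasurable
  simp only [hint]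
  exact f.continuous.continuousAt

/-- If the set Θ* of equilibrium models is finite and
`Θ* ∪ {0,1} = {θ_0 < … < θ_N}`, then on each interval `(θ_n, θ_{n+1})` the best-reply
dynamics of the closest model is unidirectional: either `θ(δ_x) > θ` for every
`θ` in the interval and every `x ∈ F(δ_θ)`, or `θ(δ_x) < θ` for every such `θ, x`. -/
theorem stmt13
    {X : Type} [Fintype X] [Nonempty X] [DecidableEq X]
    [TopologicalSpace X] [DiscreteTopology X]
    {Y : Type} [MeasurableSpace Y] [MetricSpace Y] [CompactSpace Y] [BorelSpace Y]
    (ν : Measure Y) [SigmaFinite ν]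
    (Q : X → Measure Y) (hQprob : ∀ x, IsProbabilityMeasure (Q x))
    (q : X → Y → ℝ)
    (hq : ∀ x, Q x = ν.withDensity fun y => ENNReal.ofReal (q x y))
    -- the model space is Θ = [0,1] ⊂ ℝ
    (Qθ : ℝ → X → Measure Y)
    (hQθprob : ∀ θ ∈ Set.Icc (0 : ℝ) 1, ∀ x, IsProbabilityMeasure (Qθ θ x))
    (qθ : ℝ → X → Y → ℝ)
    (hqθ : ∀ θ ∈ Set.Icc (0 : ℝ) 1, ∀ x,
      Qθ θ x = ν.withDensity fun y => ENNReal.ofReal (qθ θ x y))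
    (hqθcont : ∀ x, ∀ᵐ y ∂Q x, ContinuousOn (fun θ : ℝ => qθ θ x y) (Set.Icc 0 1))
    (g : X → Y → ℝ) (hgL2 : ∀ x, MemLp (g x) 2 (Q x))
    (hdom : ∀ x, ∀ᵐ y ∂Q x, ∀ θ ∈ Set.Icc (0 : ℝ) 1,
      |Real.log (q x y / qθ θ x y)| ≤ g x y)
    (ΔX : Set (EuclideanSpace ℝ X))
    (hΔX : ΔX = {σ | (∀ x, 0 ≤ σ x) ∧ ∑ x, σ x = 1})
    (K : ℝ → EuclideanSpace ℝ X → ℝ)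
    (hK : ∀ θ σ, K θ σ = ∑ x, σ x * ∫ y, Real.log (q x y / qθ θ x y) ∂(Q x))
    -- identifiability: unique KL minimizer θ(σ) on [0,1]
    (θmin : EuclideanSpace ℝ X → ℝ)
    (hθminmem : ∀ σ ∈ ΔX, θmin σ ∈ Set.Icc (0 : ℝ) 1)
    (hθminuniq : ∀ σ ∈ ΔX, ∀ θ ∈ Set.Icc (0 : ℝ) 1, θ ≠ θmin σ → K (θmin σ) σ < K θ σ)
    -- smoothness and the second-order condition at interior minimizers
    (hsmooth : ∀ σ ∈ ΔX, ContDiffOn ℝ 2 (fun θ => K θ σ) (Set.Ioo 0 1))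
    (hsoc : ∀ σ ∈ ΔX, θmin σ ∈ Set.Ioo (0 : ℝ) 1 →
      0 < deriv (deriv fun θ => K θ σ) (θmin σ))
    -- the policy correspondence F, upper hemi-continuous (closed graph), nonempty-valued
    (F : ProbabilityMeasure (Set.Icc (0 : ℝ) 1) → Set X)
    (hFne : ∀ μ, (F μ).Nonempty)
    (hFgraph : IsClosed {p : ProbabilityMeasure (Set.Icc (0 : ℝ) 1) × X | p.2 ∈ F p.1})
    -- the set of closest models, ΔF(ΔΘ(σ)), and point masses
    (ΘminSet : EuclideanSpace ℝ X → Set (Set.Icc (0 : ℝ) 1))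
    (hΘminSet : ∀ σ, ΘminSet σ =
      {θ : Set.Icc (0 : ℝ) 1 | ∀ θ' : Set.Icc (0 : ℝ) 1, K ↑θ σ ≤ K ↑θ' σ})
    (DFDT : EuclideanSpace ℝ X → Set (EuclideanSpace ℝ X))
    (hDFDT : ∀ σ, DFDT σ = {ρ | ρ ∈ ΔX ∧ ∀ x, 0 < ρ x →
      ∃ μ : ProbabilityMeasure (Set.Icc (0 : ℝ) 1),
        (μ : Measure (Set.Icc (0 : ℝ) 1)) (ΘminSet σ) = 1 ∧ x ∈ F μ})
    (δ : X → EuclideanSpace ℝ X)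
    (hδ : ∀ x x', δ x x' = if x' = x then (1 : ℝ) else 0)
    -- the set of equilibrium models, assumed finite, enumerated with 0 and 1
    (Θstar : Set ℝ)
    (hΘstar : Θstar = {θs | ∃ σ ∈ ΔX, σ ∈ DFDT σ ∧ θmin σ = θs})
    (hfin : Θstar.Finite)
    (N : ℕ) (θseq : Fin (N + 1) → ℝ)
    (hmono : StrictMono θseq)
    (hrange : Set.range θseq = Θstar ∪ {0, 1}) :
    ∀ n : Fin N,
      (∀ θ : ℝ, ∀ hθ : θ ∈ Set.Icc (0 : ℝ) 1,
        θ ∈ Set.Ioo (θseq n.castSucc) (θseq n.succ) →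
        ∀ x ∈ F (diracPM (⟨θ, hθ⟩ : Set.Icc (0 : ℝ) 1)), θ < θmin (δ x))
      ∨ (∀ θ : ℝ, ∀ hθ : θ ∈ Set.Icc (0 : ℝ) 1,
        θ ∈ Set.Ioo (θseq n.castSucc) (θseq n.succ) →
        ∀ x ∈ F (diracPM (⟨θ, hθ⟩ : Set.Icc (0 : ℝ) 1)), θmin (δ x) < θ) := by
  classical
  intro n
  -- every θseq value lies in [0,1]
  have hseqIcc : ∀ i, θseq i ∈ Set.Icc (0:ℝ) 1 := by
    intro i
    have hmem : θseq i ∈ Θstar ∪ {0, 1} := by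
      rw [← hrange]; exact Set.mem_range_self i
    rcases hmem with hs | hs
    · rw [hΘstar] at hs
      obtain ⟨σ, hσ, _, heq⟩ := hs
      rw [← heq]
      exact hθminmem σ hσ
    · rcases hs with hs | hs
      · rw [hs]; exact ⟨le_refl _, zero_le_one⟩
      · rw [Set.mem_singleton_iff] at hs; rw [hs]; exact ⟨zero_le_one, le_refl _⟩
  have hIsub : Set.Ioo (θseq n.castSucc) (θseq n.succ) ⊆ Set.Ioo (0:ℝ) 1 := by
    intro θ hθ
    exact ⟨lt_of_le_of_lt (hseqIcc n.castSucc).1 hθ.1,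
      lt_of_lt_of_le hθ.2 (hseqIcc n.succ).2⟩
  -- δ x is a vertex of the simplex
  have hδmem : ∀ x, δ x ∈ ΔX := by
    intro x
    rw [hΔX]
    constructor
    · intro x'; rw [hδ]; split <;> norm_num
    · calc ∑ x', δ x x' = ∑ x', if x' = x then (1:ℝ) else 0 :=
        Finset.sum_congr rfl fun x' _ => hδ x x'
      _ = 1 := by rw [Finset.sum_ite_eq' Finset.univ x (fun _ => (1:ℝ))]; simp
  -- K at a vertex is the single integral
  have hKδ : ∀ x s, K s (δ x) = ∫ y, Real.log (q x y / qθ s x y) ∂(Q x) := by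
    intro x s
    rw [hK]
    have : ∀ x', δ x x' * ∫ y, Real.log (q x' y / qθ s x' y) ∂(Q x')
        = if x' = x then ∫ y, Real.log (q x' y / qθ s x' y) ∂(Q x') else 0 := by
      intro x'; rw [hδ]; split <;> simp
    rw [Finset.sum_congr rfl fun x' _ => this x']
    rw [Finset.sum_ite_eq' Finset.univ x]
    simp
  -- no equilibrium model strictly inside the interval
  have hstar_not : ∀ θ ∈ Set.Ioo (θseq n.castSucc) (θseq n.succ), θ ∉ Θstar := by
    intro θ hθI hθS
    have : θ ∈ Set.range θseq := by rw [hrange]; exact Or.inl hθS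
    obtain ⟨i, hi⟩ := this
    rcases le_or_gt i n.castSucc with h | h
    · have := hmono.monotone h
      rw [hi] at this
      exact absurd hθI.1 (not_lt.mpr this)
    · have h2 : n.succ ≤ i := by
        rwa [← Fin.castSucc_lt_iff_succ_le]
      have := hmono.monotone h2
      rw [hi] at this
      exact absurd hθI.2 (not_lt.mpr this)
  -- the equilibrium construction
  have hmkeq : ∀ (θ : ℝ) (hθ : θ ∈ Set.Icc (0:ℝ) 1) (σ : EuclideanSpace ℝ X), σ ∈ ΔX →
      θmin σ = θ → (∀ x, 0 < σ x → x ∈ F (diracPM (⟨θ, hθ⟩ : Set.Icc (0:ℝ) 1))) →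
      θ ∈ Θstar := by
    intro θ hθ σ hσ hminσ hsupp
    rw [hΘstar]
    refine ⟨σ, hσ, ?_, hminσ⟩
    rw [hDFDT]
    refine ⟨hσ, fun x hx => ⟨diracPM (⟨θ, hθ⟩ : Set.Icc (0:ℝ) 1), ?_, hsupp x hx⟩⟩
    have hmem : (⟨θ, hθ⟩ : Set.Icc (0:ℝ) 1) ∈ ΘminSet σ := by
      rw [hΘminSet]
      intro θ'
      rcases eq_or_ne ((θ' : ℝ)) (θmin σ) with he | hne
      · show K θ σ ≤ K (θ' : ℝ) σ
        rw [he, hminσ]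
      · show K θ σ ≤ K (θ' : ℝ) σ
        rw [← hminσ]
        exact (hθminuniq σ hσ (θ' : ℝ) θ'.2 hne).le
    show (Measure.dirac (⟨θ, hθ⟩ : Set.Icc (0:ℝ) 1)) (ΘminSet σ) = 1
    exact Measure.dirac_apply_of_mem hmem
  -- no equality inside the interval
  have hne_min : ∀ θ ∈ Set.Ioo (θseq n.castSucc) (θseq n.succ),
      ∀ (hθ : θ ∈ Set.Icc (0:ℝ) 1), ∀ x ∈ F (diracPM (⟨θ, hθ⟩ : Set.Icc (0:ℝ) 1)),
      θmin (δ x) ≠ θ := by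
    intro θ hθI hθ x hx heq
    apply hstar_not θ hθI
    apply hmkeq θ hθ (δ x) (hδmem x) heq
    intro x' hx'
    have : x' = x := by
      by_contra hne
      rw [hδ x x', if_neg hne] at hx'
      exact absurd hx' (lt_irrefl 0)
    rwa [this]
  -- integrability of the dominating functions
  have hgint : ∀ x, Integrable (g x) (Q x) := by
    intro x
    haveI := hQprob x
    exact (hgL2 x).integrable (by norm_num)
  -- a.e. positivity of the densities
  have hqpos : ∀ x, ∀ᵐ y ∂Q x, 0 < q x y := by
    intro x
    exact aux_ae_pos ν (q x) (Q x) (hq x) (hQprob x)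
  -- a.e. continuity of the integrand in the parameter
  have hcont' : ∀ x, ∀ᵐ y ∂Q x,
      ContinuousOn (fun s => Real.log (q x y / qθ s x y)) (Set.Icc 0 1) := by
    intro x
    filter_upwards [hqpos x, hqθcont x, hdom x] with y h1 h2 h3
    exact aux_log_contOn h1 h2 h3
  -- boundedness of the vertex KL functions
  have haC : ∀ x, ∀ s ∈ Set.Icc (0:ℝ) 1, |K s (δ x)| ≤ ∫ y, g x y ∂(Q x) := by
    intro x s hs
    rw [hKδ]
    have hgnn : 0 ≤ᵐ[Q x] g x := by
      filter_upwards [hdom x] with y hy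
      exact le_trans (abs_nonneg _) (hy s hs)
    by_cases hint : Integrable (fun y => Real.log (q x y / qθ s x y)) (Q x)
    · rw [← Real.norm_eq_abs]
      apply norm_integral_le_of_norm_le (hgint x)
      filter_upwards [hdom x] with y hy
      rw [Real.norm_eq_abs]
      exact hy s hs
    · rw [integral_undef hint, abs_zero]
      exact integral_nonneg_of_ae hgnn
  -- continuity of vertex KL functions on the interior
  have hacont : ∀ x, ContinuousOn (fun s => K s (δ x)) (Set.Ioo 0 1) :=
    fun x => (hsmooth (δ x) (hδmem x)).continuousOn
  -- endpoint behaviour of vertex KL functions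
  have haend : ∀ x, ∀ e : ℝ, e = 0 ∨ e = 1 →
      Tendsto (fun s => K s (δ x)) (𝓝[Set.Ioo (0:ℝ) 1] e) (𝓝 (K e (δ x))) ∨
        (∀ᶠ s in 𝓝[Set.Ioo (0:ℝ) 1] e, K s (δ x) = 0) := by
    intro x e he
    haveI := hQprob x
    exact aux_endpoint (Q x) (fun s y => Real.log (q x y / qθ s x y)) (g x)
      (hgint x) (hcont' x) (hdom x) (fun s => K s (δ x)) (hKδ x) (hacont x) e he
  -- the crossing killer
  have hcross : ∀ θ (hθ : θ ∈ Set.Icc (0:ℝ) 1),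
      θ ∈ Set.Ioo (θseq n.castSucc) (θseq n.succ) →
      ∀ x₁ x₂, x₁ ∈ F (diracPM (⟨θ, hθ⟩ : Set.Icc (0:ℝ) 1)) →
      x₂ ∈ F (diracPM (⟨θ, hθ⟩ : Set.Icc (0:ℝ) 1)) →
      θ < θmin (δ x₁) → θmin (δ x₂) < θ → False := by
    intro θ hθ hθI x₁ x₂ hx₁ hx₂ hgt hlt
    set σt : ℝ → EuclideanSpace ℝ X :=
      fun t => WithLp.toLp 2 (fun x => t * δ x₁ x + (1-t) * δ x₂ x : X → ℝ) with hσt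
    have happ : ∀ t x, σt t x = t * δ x₁ x + (1-t) * δ x₂ x := fun t x => rfl
    have hσmem : ∀ t ∈ Set.Icc (0:ℝ) 1, σt t ∈ ΔX := by
      intro t ht
      rw [hΔX]
      constructor
      · intro x
        rw [happ]
        have h1 : 0 ≤ δ x₁ x := by rw [hδ]; split <;> norm_num
        have h2 : 0 ≤ δ x₂ x := by rw [hδ]; split <;> norm_num
        have := ht.1; have := ht.2
        nlinarith
      · have hs1 : ∑ x, δ x₁ x = 1 := by
          have := hδmem x₁; rw [hΔX] at this; exact this.2
        have hs2 : ∑ x, δ x₂ x = 1 := by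
          have := hδmem x₂; rw [hΔX] at this; exact this.2
        calc ∑ x, σt t x = ∑ x, (t * δ x₁ x + (1-t) * δ x₂ x) :=
            Finset.sum_congr rfl fun x _ => happ t x
          _ = t * (∑ x, δ x₁ x) + (1-t) * (∑ x, δ x₂ x) := by
            rw [Finset.sum_add_distrib, ← Finset.mul_sum, ← Finset.mul_sum]
          _ = 1 := by rw [hs1, hs2]; ring
    have hKσ : ∀ t s, K s (σt t) = t * K s (δ x₁) + (1-t) * K s (δ x₂) := by
      intro t s
      rw [hK, hK, hK, Finset.mul_sum, Finset.mul_sum, ← Finset.sum_add_distrib]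
      apply Finset.sum_congr rfl
      intro x _
      rw [happ]
      ring
    set m : ℝ → ℝ := fun t => θmin (σt t) with hm
    have hσ0 : σt 0 = δ x₂ := by
      ext x
      rw [happ]; ring
    have hσ1 : σt 1 = δ x₁ := by
      ext x
      rw [happ]; ring
    obtain ⟨t, htIcc, htm⟩ := aux_seg (fun s => K s (δ x₁)) (fun s => K s (δ x₂))
      (∫ y, g x₁ y ∂(Q x₁)) (∫ y, g x₂ y ∂(Q x₂)) m θ (hIsub hθI)
      (fun t ht => hθminmem _ (hσmem t ht))
      (by
        intro t ht s hs hne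
        have hne' : s ≠ θmin (σt t) := hne
        have := hθminuniq (σt t) (hσmem t ht) s hs hne'
        rw [hKσ, hKσ] at this
        exact this)
      (haC x₁) (haC x₂) (hacont x₁) (hacont x₂) (haend x₁) (haend x₂)
      (by show θmin (σt 0) < θ; rw [hσ0]; exact hlt)
      (by show θ < θmin (σt 1); rw [hσ1]; exact hgt)
    -- build the equilibrium
    apply hstar_not θ hθI
    apply hmkeq θ hθ (σt t) (hσmem t htIcc) htm
    intro x hx
    rw [happ] at hx
    have : x = x₁ ∨ x = x₂ := by
      by_contra hc
      push_neg at hc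
      rw [hδ x₁ x, hδ x₂ x, if_neg hc.1, if_neg hc.2] at hx
      simp at hx
    rcases this with h | h
    · rwa [h]
    · rwa [h]
  -- the two one-sided sets
  set I : Set ℝ := Set.Ioo (θseq n.castSucc) (θseq n.succ) with hI
  set A : X → Set ℝ := fun x => {θ' | ∃ h' : θ' ∈ Set.Icc (0:ℝ) 1, θ' ∈ I ∧
    x ∈ F (diracPM (⟨θ', h'⟩ : Set.Icc (0:ℝ) 1)) ∧ θ' < θmin (δ x)} with hA
  set B : X → Set ℝ := fun x => {θ' | ∃ h' : θ' ∈ Set.Icc (0:ℝ) 1, θ' ∈ I ∧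
    x ∈ F (diracPM (⟨θ', h'⟩ : Set.Icc (0:ℝ) 1)) ∧ θmin (δ x) < θ'} with hB
  -- closedness of the F-graph sections in ℝ
  have hDclosed : ∀ x : X, IsClosed
      (Subtype.val '' {p : Set.Icc (0:ℝ) 1 | x ∈ F (diracPM p)}) := by
    intro x
    have hCx : IsClosed {p : Set.Icc (0:ℝ) 1 | x ∈ F (diracPM p)} := by
      have hmap : Continuous fun p : Set.Icc (0:ℝ) 1 =>
          ((diracPM p, x) : ProbabilityMeasure (Set.Icc (0:ℝ) 1) × X) :=
        aux_dirac_cont.prodMk continuous_const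
      exact hFgraph.preimage hmap
    exact ((isClosed_Icc (a := (0:ℝ)) (b := 1)).isClosedEmbedding_subtypeVal).isClosedMap
      _ hCx
  -- relative closedness of ⋃ A and ⋃ B in I
  have hclosedA : ∀ θ ∈ closure (⋃ x, A x), θ ∈ I → θ ∈ ⋃ x, A x := by
    intro θ hθc hθI
    have hθIcc : θ ∈ Set.Icc (0:ℝ) 1 :=
      ⟨(hIsub hθI).1.le, (hIsub hθI).2.le⟩
    have hsub : closure (⋃ x, A x) ⊆ ⋃ x, closure (A x) :=
      closure_minimal (Set.iUnion_mono fun x => subset_closure)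
        (isClosed_iUnion_of_finite fun x => isClosed_closure)
    obtain ⟨x, hx⟩ := Set.mem_iUnion.mp (hsub hθc)
    have hxF : x ∈ F (diracPM (⟨θ, hθIcc⟩ : Set.Icc (0:ℝ) 1)) := by
      have h1 : A x ⊆ Subtype.val '' {p : Set.Icc (0:ℝ) 1 | x ∈ F (diracPM p)} := by
        intro θ' hθ'
        obtain ⟨h', _, hF', _⟩ := hθ'
        exact ⟨⟨θ', h'⟩, hF', rfl⟩
      have h2 := (closure_minimal h1 (hDclosed x)) hx
      obtain ⟨p, hp, hpv⟩ := h2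
      have : p = (⟨θ, hθIcc⟩ : Set.Icc (0:ℝ) 1) := Subtype.ext hpv
      rwa [this] at hp
    have hle : θ ≤ θmin (δ x) := by
      have h1 : A x ⊆ Set.Iic (θmin (δ x)) := by
        intro θ' hθ'
        obtain ⟨_, _, _, hlt⟩ := hθ'
        exact hlt.le
      exact (closure_minimal h1 isClosed_Iic) hx
    have hne := hne_min θ hθI hθIcc x hxF
    exact Set.mem_iUnion.mpr ⟨x, hθIcc, hθI, hxF, lt_of_le_of_ne hle (Ne.symm hne)⟩
  have hclosedB : ∀ θ ∈ closure (⋃ x, B x), θ ∈ I → θ ∈ ⋃ x, B x := by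
    intro θ hθc hθI
    have hθIcc : θ ∈ Set.Icc (0:ℝ) 1 :=
      ⟨(hIsub hθI).1.le, (hIsub hθI).2.le⟩
    have hsub : closure (⋃ x, B x) ⊆ ⋃ x, closure (B x) :=
      closure_minimal (Set.iUnion_mono fun x => subset_closure)
        (isClosed_iUnion_of_finite fun x => isClosed_closure)
    obtain ⟨x, hx⟩ := Set.mem_iUnion.mp (hsub hθc)
    have hxF : x ∈ F (diracPM (⟨θ, hθIcc⟩ : Set.Icc (0:ℝ) 1)) := by
      have h1 : B x ⊆ Subtype.val '' {p : Set.Icc (0:ℝ) 1 | x ∈ F (diracPM p)} := by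
        intro θ' hθ'
        obtain ⟨h', _, hF', _⟩ := hθ'
        exact ⟨⟨θ', h'⟩, hF', rfl⟩
      have h2 := (closure_minimal h1 (hDclosed x)) hx
      obtain ⟨p, hp, hpv⟩ := h2
      have : p = (⟨θ, hθIcc⟩ : Set.Icc (0:ℝ) 1) := Subtype.ext hpv
      rwa [this] at hp
    have hle : θmin (δ x) ≤ θ := by
      have h1 : B x ⊆ Set.Ici (θmin (δ x)) := by
        intro θ' hθ'
        obtain ⟨_, _, _, hlt⟩ := hθ'
        exact hlt.le
      exact (closure_minimal h1 isClosed_Ici) hx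
    have hne := hne_min θ hθI hθIcc x hxF
    exact Set.mem_iUnion.mpr ⟨x, hθIcc, hθI, hxF, lt_of_le_of_ne hle hne⟩
  -- A and B are disjoint
  have hdisj : ∀ θ, θ ∈ ⋃ x, A x → θ ∈ ⋃ x, B x → False := by
    intro θ h1 h2
    obtain ⟨x₁, hA1⟩ := Set.mem_iUnion.mp h1
    obtain ⟨x₂, hB2⟩ := Set.mem_iUnion.mp h2
    obtain ⟨hc1, hI1, hF1, hlt1⟩ := hA1
    obtain ⟨hc2, hI2, hF2, hlt2⟩ := hB2
    exact hcross θ hc1 hI1 x₁ x₂ hF1 hF2 hlt1 hlt2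
  -- every point of I is in A ∪ B
  have hcover : ∀ θ ∈ I, θ ∈ (⋃ x, A x) ∪ (⋃ x, B x) := by
    intro θ hθI
    have hθIcc : θ ∈ Set.Icc (0:ℝ) 1 :=
      ⟨(hIsub hθI).1.le, (hIsub hθI).2.le⟩
    obtain ⟨x, hx⟩ := hFne (diracPM (⟨θ, hθIcc⟩ : Set.Icc (0:ℝ) 1))
    rcases lt_trichotomy θ (θmin (δ x)) with h | h | h
    · exact Or.inl (Set.mem_iUnion.mpr ⟨x, hθIcc, hθI, hx, h⟩)
    · exact absurd h.symm (hne_min θ hθI hθIcc x hx)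
    · exact Or.inr (Set.mem_iUnion.mpr ⟨x, hθIcc, hθI, hx, h⟩)
  -- one of the two is empty on I
  have hkey : (⋃ x, A x) = ∅ ∨ (⋃ x, B x) = ∅ := by
    by_contra hcon
    push_neg at hcon
    obtain ⟨hAne, hBne⟩ := hcon
    obtain ⟨θA, hθA⟩ := hAne
    obtain ⟨θB, hθB⟩ := hBne
    have hAI : ∀ θ' ∈ ⋃ x, A x, θ' ∈ I := by
      intro θ' h
      obtain ⟨x, hx⟩ := Set.mem_iUnion.mp h
      exact hx.2.1
    have hBI : ∀ θ' ∈ ⋃ x, B x, θ' ∈ I := by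
      intro θ' h
      obtain ⟨x, hx⟩ := Set.mem_iUnion.mp h
      exact hx.2.1
    have hpre : IsPreconnected I := isPreconnected_Ioo
    have hres := hpre (closure (⋃ x, B x))ᶜ (closure (⋃ x, A x))ᶜ
      (isClosed_closure.isOpen_compl) (isClosed_closure.isOpen_compl)
      (by
        intro θ hθI
        rcases hcover θ hθI with h | h
        · left
          intro hc
          exact hdisj θ h (hclosedB θ hc hθI)
        · right
          intro hc
          exact hdisj θ (hclosedA θ hc hθI) h)
      ⟨θA, hAI θA hθA, fun hc => hdisj θA hθA (hclosedB θA hc (hAI θA hθA))⟩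
      ⟨θB, hBI θB hθB, fun hc => hdisj θB (hclosedA θB hc (hBI θB hθB)) hθB⟩
    obtain ⟨θ0, hθ0I, hθ0B, hθ0A⟩ := hres
    rcases hcover θ0 hθ0I with h | h
    · exact hθ0A (subset_closure h)
    · exact hθ0B (subset_closure h)
  rcases hkey with hAe | hBe
  · right
    intro θ hθ hθI x hx
    have hne := hne_min θ hθI hθ x hx
    rcases lt_trichotomy (θmin (δ x)) θ with h | h | h
    · exact h
    · exact absurd h hne
    · exfalso
      have : θ ∈ ⋃ x', A x' := Set.mem_iUnion.mpr ⟨x, hθ, hθI, hx, h⟩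
      rw [hAe] at this
      exact this
  · left
    intro θ hθ hθI x hx
    have hne := hne_min θ hθI hθ x hx
    rcases lt_trichotomy θ (θmin (δ x)) with h | h | h
    · exact h
    · exact absurd h.symm hne
    · exfalso
      have : θ ∈ ⋃ x', B x' := Set.mem_iUnion.mpr ⟨x, hθ, hθI, hx, h⟩
      rw [hBe] at this
      exact this
end
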